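/- If G is a finite group possessing a subnormal series {e} = G₀ ⊲ G₁ ⊲ ... ⊲ Gₙ = G in which every factor G_{i+1}/G_i is either a π-group or a π'-group, then G possesses a π-Hall subgroup. -/

import Mathlib

def IsHall {G : Type*} [Group G] (π : Set ℕ) (H : Subgroup G) : Prop :=
  (∀ p : ℕ, p.Prime → p ∣ Nat.card H → p ∈ π) ∧
  (∀ p : ℕ, p.Prime → p ∣ H.index → p ∉ π)

namespace HallAux

open Subgroup

variable {G : Type*} [Group G]

/-- `H` is a π-group. -/
def PiG (π : Set ℕ) {G : Type*} [Group G] (H : Subgroup G) : Prop :=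
  ∀ p : ℕ, p.Prime → p ∣ Nat.card H → p ∈ π

lemma piG_bot (π : Set ℕ) : PiG π (⊥ : Subgroup G) := by
  intro p hp hd
  rw [Subgroup.card_bot] at hd
  exact absurd (Nat.dvd_one.mp hd) hp.ne_one

lemma card_subgroupOf {H K : Subgroup G} (h : H ≤ K) :
    Nat.card (H.subgroupOf K) = Nat.card H :=
  Nat.card_congr (subgroupOfEquivOfLe h).toEquiv

lemma card_eq_card_mul_relindex {H K : Subgroup G} (h : H ≤ K) :
    Nat.card K = Nat.card H * H.relIndex K := by
  rw [← relIndex_bot_left (H := K), ← relIndex_bot_left (H := H),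
    relIndex_mul_relIndex ⊥ H K bot_le h]

lemma piG_sup [Finite G] {π : Set ℕ} {N M : Subgroup G} (hN : N.Normal)
    (hpN : PiG π N) (hpM : PiG π M) : PiG π (N ⊔ M) := by
  intro p hp hd
  haveI := hN
  have h1 : Nat.card (N ⊔ M : Subgroup G) = Nat.card N * N.relIndex (N ⊔ M) :=
    card_eq_card_mul_relindex le_sup_left
  have h2 : N.relIndex (N ⊔ M) ∣ Nat.card M := by
    rw [relIndex_sup_left]
    have := relIndex_dvd_of_le_left (H := (⊥ : Subgroup G)) (K := N) M bot_le
    rwa [relIndex_bot_left] at this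
  have hdvd : Nat.card (N ⊔ M : Subgroup G) ∣ Nat.card N * Nat.card M :=
    h1 ▸ mul_dvd_mul_left _ h2
  rcases hp.dvd_mul.mp (hd.trans hdvd) with h | h
  · exact hpN p hp h
  · exact hpM p hp h

/-- The set of normal π-subgroups. -/
def piSet (π : Set ℕ) (G : Type*) [Group G] : Set (Subgroup G) :=
  {N : Subgroup G | N.Normal ∧ PiG π N}

/-- `Oπ(G)`, the join of all normal π-subgroups. -/
def Opi (π : Set ℕ) (G : Type*) [Group G] : Subgroup G :=
  ⨆ N ∈ piSet π G, N

lemma le_Opi {π : Set ℕ} {N : Subgroup G} (h : N ∈ piSet π G) : N ≤ Opi π G :=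
  le_iSup₂ (f := fun (N : Subgroup G) (_ : N ∈ piSet π G) => N) N h

lemma Opi_mem [Finite G] (π : Set ℕ) : Opi π G ∈ piSet π G := by
  have hfin : (piSet π G).Finite := Set.toFinite _
  have hne : (piSet π G).Nonempty := ⟨⊥, ⟨inferInstance, piG_bot π⟩⟩
  obtain ⟨M, hM, hmax⟩ :=
    hfin.exists_maximalFor (fun N : Subgroup G => Nat.card N) _ hne
  have hle : ∀ N ∈ piSet π G, N ≤ M := by
    intro N hN
    haveI := hM.1; haveI := hN.1
    have hmem : M ⊔ N ∈ piSet π G := ⟨inferInstance, piG_sup hM.1 hM.2 hN.2⟩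
    have hcard : Nat.card M ≤ Nat.card (M ⊔ N : Subgroup G) := by
      rw [card_eq_card_mul_relindex (le_sup_left : M ≤ M ⊔ N)]
      have hpos : 0 < M.relIndex (M ⊔ N) := by
        have : (M.subgroupOf (M ⊔ N)).index ≠ 0 := Subgroup.index_ne_zero_of_finite
        exact Nat.pos_of_ne_zero this
      exact Nat.le_mul_of_pos_right _ hpos
    have heqc := le_antisymm hcard (hmax hmem hcard)
    have heq : M = M ⊔ N := Subgroup.eq_of_le_of_card_ge le_sup_left heqc.ge
    exact le_sup_right.trans heq.ge
  have : Opi π G = M := le_antisymm (iSup₂_le hle) (le_Opi hM)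
  rw [this]; exact hM

lemma map_Opi_le {G' : Type*} [Group G'] (π : Set ℕ) (φ : G ≃* G') :
    (Opi π G).map φ.toMonoidHom ≤ Opi π G' := by
  rw [map_le_iff_le_comap]
  refine iSup₂_le fun N hN => map_le_iff_le_comap.mp (le_Opi ⟨?_, ?_⟩)
  · exact hN.1.map φ.toMonoidHom φ.surjective
  · intro p hp hd
    refine hN.2 p hp ?_
    rwa [← Nat.card_congr (equivMapOfInjective N φ.toMonoidHom φ.injective).toEquiv]
      at hd

lemma map_Opi {G' : Type*} [Group G'] (π : Set ℕ) (φ : G ≃* G') :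
    (Opi π G).map φ.toMonoidHom = Opi π G' := by
  refine le_antisymm (map_Opi_le π φ) ?_
  have h2 := map_Opi_le π φ.symm
  have h3 := Subgroup.map_mono (f := φ.toMonoidHom) h2
  rwa [Subgroup.map_map, show φ.toMonoidHom.comp φ.symm.toMonoidHom = MonoidHom.id G'
    from by ext x; simp, Subgroup.map_id] at h3

/-- `SubnChain d K H` : there is a chain `H = L₀ ≤ L₁ ≤ ... ≤ L_d = K` with each
`L_i` normal in `L_{i+1}`. -/
def SubnChain {G : Type*} [Group G] : ℕ → Subgroup G → Subgroup G → Prop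
  | 0, K, H => H = K
  | d + 1, K, H =>
    ∃ L : Subgroup G, L ≤ K ∧ (L.subgroupOf K).Normal ∧ H ≤ L ∧ SubnChain d L H

/-- Conjugation by an element normalizing `L`, as an automorphism of `L`. -/
def conjEquiv {L : Subgroup G} {k : G} (hk : ∀ x ∈ L, k * x * k⁻¹ ∈ L)
    (hk' : ∀ x ∈ L, k⁻¹ * x * k ∈ L) : L ≃* L where
  toFun x := ⟨k * x * k⁻¹, hk x x.2⟩
  invFun x := ⟨k⁻¹ * x * k, hk' x x.2⟩
  left_inv x := by ext; simp; group
  right_inv x := by ext; simp; group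
  map_mul' x y := by ext; simp

lemma subnChain_normal_closure (π : Set ℕ) :
    ∀ (d : ℕ) (G : Type*) [Group G] [Finite G] (K H : Subgroup G),
      SubnChain d K H → PiG π H →
      ∃ N : Subgroup G, N ≤ K ∧ (N.subgroupOf K).Normal ∧ PiG π N ∧ H ≤ N := by
  intro d
  induction d with
  | zero =>
    intro G _ _ K H hch hpi
    refine ⟨K, le_rfl, ?_, ?_, ?_⟩
    · rw [subgroupOf_self]; infer_instance
    · exact hch ▸ hpi
    · exact hch.le
  | succ d ih =>
    intro G _ _ K H hch hpi
    obtain ⟨L, hLK, hLnorm, hHL, hch'⟩ := hch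
    obtain ⟨N, hNL, hNnorm, hNpi, hHN⟩ := ih G L H hch' hpi
    refine ⟨(Opi π ↥L).map L.subtype, (map_subtype_le _).trans hLK, ?_, ?_, ?_⟩
    · constructor
      intro w hw g
      rw [Subgroup.mem_subgroupOf] at hw ⊢
      obtain ⟨y, hy, hyw⟩ := hw
      have hk : ∀ x ∈ L, (g : G) * x * (g : G)⁻¹ ∈ L := by
        intro x hx
        have := hLnorm.conj_mem ⟨x, hLK hx⟩ (by rwa [mem_subgroupOf]) g
        rwa [mem_subgroupOf] at this
      have hk' : ∀ x ∈ L, (g : G)⁻¹ * x * (g : G) ∈ L := by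
        intro x hx
        have := hLnorm.conj_mem ⟨x, hLK hx⟩ (by rwa [mem_subgroupOf]) g⁻¹
        rw [mem_subgroupOf] at this
        simpa using this
      have hmem : (conjEquiv hk hk') y ∈ Opi π ↥L := by
        rw [← map_Opi π (conjEquiv hk hk')]
        exact mem_map_of_mem _ hy
      refine mem_map.mpr ⟨(conjEquiv hk hk') y, hmem, ?_⟩
      show (((conjEquiv hk hk') y : L) : G) = _
      simp only [conjEquiv, MulEquiv.coe_mk, Equiv.coe_fn_mk]
      show (g : G) * (y : G) * (g : G)⁻¹ = _
      have : (L.subtype y : G) = (w : G) := hyw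
      simp only [Subgroup.coe_subtype] at this
      push_cast
      rw [this]
    · intro p hp hd
      have hcc : Nat.card ((Opi π ↥L).map L.subtype) = Nat.card (Opi π ↥L) :=
        (Nat.card_congr (equivMapOfInjective _ _ (subtype_injective L)).toEquiv).symm
      exact (Opi_mem (G := ↥L) π).2 p hp (hcc ▸ hd)
    · have h1 : N.subgroupOf L ∈ piSet π ↥L := by
        refine ⟨hNnorm, fun p hp hd => hNpi p hp ?_⟩
        rwa [card_subgroupOf hNL] at hd
      have h2 : N.subgroupOf L ≤ Opi π ↥L := le_Opi h1
      intro x hx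
      have hxL : x ∈ L := hHL hx
      refine mem_map.mpr ⟨⟨x, hxL⟩, h2 ?_, rfl⟩
      rw [mem_subgroupOf]
      exact hHN hx

section Series

variable {n : ℕ} {c : Fin (n + 1) → Subgroup G}

lemma series_mono (hle : ∀ i : Fin n, c i.castSucc ≤ c i.succ) :
    ∀ i j : Fin (n + 1), i ≤ j → c i ≤ c j := by
  have key : ∀ (b : ℕ) (hb : b ≤ n) (a : ℕ) (ha : a ≤ b),
      c ⟨a, by omega⟩ ≤ c ⟨b, by omega⟩ := by
    intro b
    induction b with
    | zero => intro hb a ha; interval_cases a; exact le_rfl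
    | succ b ihb =>
      intro hb a ha
      rcases Nat.eq_or_lt_of_le ha with h | h
      · subst h; exact le_rfl
      · have h1 : c ⟨a, by omega⟩ ≤ c ⟨b, by omega⟩ := ihb (by omega) a (by omega)
        have h2 := hle ⟨b, by omega⟩
        have hcast : (⟨b, by omega⟩ : Fin n).castSucc = ⟨b, by omega⟩ := rfl
        have hsucc : (⟨b, by omega⟩ : Fin n).succ = ⟨b + 1, by omega⟩ := rfl
        rw [hcast, hsucc] at h2
        exact h1.trans h2
  intro i j hij
  have := key j.val (by omega) i.val (by exact hij)
  simpa using this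

lemma series_subnChain (hle : ∀ i : Fin n, c i.castSucc ≤ c i.succ)
    (hnorm : ∀ i : Fin n, ((c i.castSucc).subgroupOf (c i.succ)).Normal) :
    ∀ (d : ℕ) (j m : Fin (n + 1)), j.val + d = m.val →
      SubnChain d (c m) (c j) := by
  intro d
  induction d with
  | zero =>
    intro j m h
    have : j = m := Fin.ext (by omega)
    rw [this]
    show c m = c m
    rfl
  | succ d ih =>
    intro j m h
    have hmn : j.val + d < n := by omega
    set i : Fin n := ⟨j.val + d, hmn⟩ with hi
    have hsucc : i.succ = m := Fin.ext (by simp [hi, Fin.val_succ]; omega)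
    have hcast : i.castSucc = ⟨j.val + d, by omega⟩ := rfl
    refine ⟨c i.castSucc, ?_, ?_, ?_, ?_⟩
    · exact hsucc ▸ hle i
    · exact hsucc ▸ hnorm i
    · exact series_mono hle j i.castSucc (by simp [hcast, Fin.le_def])
    · exact ih j i.castSucc (by simp [hcast])

lemma exists_step (h0 : c 0 = ⊥) (htop : c (Fin.last n) ≠ ⊥) :
    ∃ i : Fin n, c i.castSucc = ⊥ ∧ c i.succ ≠ ⊥ := by
  by_contra hcon
  push_neg at hcon
  have key : ∀ (k : ℕ) (hk : k ≤ n), c ⟨k, by omega⟩ = ⊥ := by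
    intro k
    induction k with
    | zero =>
      intro _
      have : (⟨0, by omega⟩ : Fin (n + 1)) = 0 := rfl
      rw [this, h0]
    | succ k ihk =>
      intro hk
      have hk' : k < n := by omega
      have h1 := ihk (by omega)
      have := hcon ⟨k, hk'⟩ (by
        have hcast : (⟨k, hk'⟩ : Fin n).castSucc = ⟨k, by omega⟩ := rfl
        rw [hcast, h1])
      have hsucc : (⟨k, hk'⟩ : Fin n).succ = ⟨k + 1, by omega⟩ := rfl
      rwa [hsucc] at this
  refine htop ?_
  have := key n le_rfl
  have hlast : (Fin.last n) = ⟨n, by omega⟩ := rfl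
  rw [hlast, this]

end Series

lemma map_subgroupOf_normal {G' : Type*} [Group G'] (f : G →* G') {A B : Subgroup G}
    (hAB : A ≤ B) (h : (A.subgroupOf B).Normal) :
    ((A.map f).subgroupOf (B.map f)).Normal := by
  constructor
  intro y hy g
  rw [mem_subgroupOf] at hy ⊢
  obtain ⟨a, ha, hay⟩ := hy
  obtain ⟨b, hb, hbg⟩ := g.2
  have key : b * a * b⁻¹ ∈ A := by
    have := h.conj_mem ⟨a, hAB ha⟩ (by rwa [mem_subgroupOf]) ⟨b, hb⟩
    rwa [mem_subgroupOf] at this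
  refine ⟨b * a * b⁻¹, key, ?_⟩
  push_cast
  rw [map_mul, map_mul, map_inv, hay, hbg]

lemma relindex_map_dvd {G' : Type*} [Group G'] (f : G →* G') {A B : Subgroup G}
    (hAB : A ≤ B) : (A.map f).relIndex (B.map f) ∣ A.relIndex B := by
  have hsurj : Function.Surjective (f.subgroupMap B) := f.subgroupMap_surjective B
  have h1 : (A.map f).relIndex (B.map f) =
      (((A.map f).subgroupOf (B.map f)).comap (f.subgroupMap B)).index :=
    (Subgroup.index_comap_of_surjective _ hsurj).symm
  rw [h1]
  refine Subgroup.index_dvd_of_le (H := A.subgroupOf B)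
    (K := (((A.map f).subgroupOf (B.map f)).comap (f.subgroupMap B))) ?_
  intro x hx
  rw [Subgroup.mem_comap, mem_subgroupOf]
  exact ⟨x, hx, rfl⟩

theorem mainAux : ∀ (m : ℕ) (G : Type*) [Group G] [Finite G] (π : Set ℕ)
    (n : ℕ) (c : Fin (n + 1) → Subgroup G),
    c 0 = ⊥ → c (Fin.last n) = ⊤ →
    (∀ i : Fin n, c i.castSucc ≤ c i.succ) →
    (∀ i : Fin n, ((c i.castSucc).subgroupOf (c i.succ)).Normal) →
    (∀ i : Fin n,
      (∀ p : ℕ, p.Prime → p ∣ (c i.castSucc).relIndex (c i.succ) → p ∈ π) ∨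
      (∀ p : ℕ, p.Prime → p ∣ (c i.castSucc).relIndex (c i.succ) → p ∉ π)) →
    Nat.card G ≤ m → ∃ H : Subgroup G, IsHall π H := by
  intro m
  induction m with
  | zero =>
    intro G _ _ π n c _ _ _ _ _ hcard
    have : 0 < Nat.card G := Nat.card_pos
    omega
  | succ m ih =>
    intro G _ _ π n c h0 hn hle hnorm hfac hcard
    by_cases hone : Nat.card G = 1
    · refine ⟨⊥, fun p hp hd => ?_, fun p hp hd => ?_⟩
      · rw [Subgroup.card_bot] at hd
        exact absurd (Nat.dvd_one.mp hd) hp.ne_one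
      · rw [Subgroup.index_bot, hone] at hd
        exact absurd (Nat.dvd_one.mp hd) hp.ne_one
    · -- G is nontrivial; find a nontrivial normal π- or π'- subgroup N
      have htop_ne : c (Fin.last n) ≠ ⊥ := by
        rw [hn]
        intro hh
        apply hone
        rw [← Subgroup.card_top (G := G), hh, Subgroup.card_bot]
      obtain ⟨i0, hi0bot, hi0ne⟩ := exists_step h0 htop_ne
      have hcardrel : (c i0.castSucc).relIndex (c i0.succ) = Nat.card (c i0.succ) := by
        rw [hi0bot, relIndex_bot_left]
      have hchain : SubnChain (n - i0.succ.val) (⊤ : Subgroup G) (c i0.succ) := by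
        have := series_subnChain hle hnorm (n - i0.succ.val) i0.succ (Fin.last n)
          (by simp [Fin.last])
        rwa [hn] at this
      have key : ∀ σ : Set ℕ, PiG σ (c i0.succ) →
          ∃ N : Subgroup G, N.Normal ∧ PiG σ N ∧ N ≠ ⊥ := by
        intro σ hσ
        obtain ⟨N, _, hNnorm, hNpi, hcN⟩ :=
          subnChain_normal_closure σ _ G ⊤ (c i0.succ) hchain hσ
        refine ⟨N, ?_, hNpi, fun hbb => hi0ne (le_bot_iff.mp (hbb ▸ hcN))⟩
        constructor
        intro x hx g
        have := hNnorm.conj_mem ⟨x, mem_top x⟩ (by rwa [mem_subgroupOf]) ⟨g, mem_top g⟩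
        rwa [mem_subgroupOf] at this
      have hNex : ∃ N : Subgroup G, N.Normal ∧ N ≠ ⊥ ∧ (PiG π N ∨ PiG πᶜ N) := by
        rcases hfac i0 with h | h
        · obtain ⟨N, h1, h2, h3⟩ := key π (fun p hp hd => h p hp (hcardrel ▸ hd))
          exact ⟨N, h1, h3, Or.inl h2⟩
        · obtain ⟨N, h1, h2, h3⟩ := key πᶜ (fun p hp hd => h p hp (hcardrel ▸ hd))
          exact ⟨N, h1, h3, Or.inr h2⟩
      obtain ⟨N, hNnormal, hNbot, hNpi⟩ := hNex
      haveI := hNnormal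
      set f := QuotientGroup.mk' N with hf
      have hsurj : Function.Surjective f := QuotientGroup.mk'_surjective N
      set c' : Fin (n + 1) → Subgroup (G ⧸ N) := fun i => (c i).map f with hc'
      have hcardQ : Nat.card (G ⧸ N) * Nat.card N = Nat.card G := by
        rw [← Subgroup.index_eq_card, mul_comm, Subgroup.card_mul_index]
      have hNg1 : 1 < Nat.card N := (Subgroup.one_lt_card_iff_ne_bot N).mpr hNbot
      have hQpos : 0 < Nat.card (G ⧸ N) := Nat.card_pos
      have hQle : Nat.card (G ⧸ N) ≤ m := by
        have h2 : Nat.card (G ⧸ N) * 2 ≤ Nat.card G := by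
          calc Nat.card (G ⧸ N) * 2 ≤ Nat.card (G ⧸ N) * Nat.card N :=
                Nat.mul_le_mul_left _ hNg1
            _ = Nat.card G := hcardQ
        omega
      obtain ⟨Kbar, hK1, hK2⟩ := ih (G ⧸ N) π n c'
        (by rw [hc']; simp only [h0]; exact Subgroup.map_bot f)
        (by rw [hc']; simp only [hn]; exact Subgroup.map_top_of_surjective f hsurj)
        (fun i => Subgroup.map_mono (hle i))
        (fun i => map_subgroupOf_normal f (hle i) (hnorm i))
        (fun i => by
          rcases hfac i with h | h
          · exact Or.inl fun p hp hd => h p hp (hd.trans (relindex_map_dvd f (hle i)))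
          · exact Or.inr fun p hp hd => h p hp (hd.trans (relindex_map_dvd f (hle i))))
        hQle
      set H0 := Kbar.comap f with hH0
      have hind : H0.index = Kbar.index := Subgroup.index_comap_of_surjective _ hsurj
      have hKi0 : Kbar.index ≠ 0 := Subgroup.index_ne_zero_of_finite
      have hcardH0 : Nat.card H0 = Nat.card Kbar * Nat.card N := by
        have e1 : Nat.card H0 * H0.index = Nat.card G := Subgroup.card_mul_index H0
        have e2 : Nat.card Kbar * Kbar.index = Nat.card (G ⧸ N) := Subgroup.card_mul_index Kbar
        have e3 : Nat.card H0 * Kbar.index = (Nat.card Kbar * Nat.card N) * Kbar.index := by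
          calc Nat.card H0 * Kbar.index = Nat.card H0 * H0.index := by rw [hind]
            _ = Nat.card G := e1
            _ = Nat.card (G ⧸ N) * Nat.card N := hcardQ.symm
            _ = (Nat.card Kbar * Kbar.index) * Nat.card N := by rw [e2]
            _ = (Nat.card Kbar * Nat.card N) * Kbar.index := by ring
        exact Nat.eq_of_mul_eq_mul_right (Nat.pos_of_ne_zero hKi0) e3
      rcases hNpi with hNπ | hNπ'
      · -- N is a π-group: the preimage of Kbar works
        refine ⟨H0, fun p hp hd => ?_, fun p hp hd => ?_⟩
        · rw [hcardH0] at hd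
          rcases hp.dvd_mul.mp hd with h | h
          · exact hK1 p hp h
          · exact hNπ p hp h
        · exact hK2 p hp (hind ▸ hd)
      · -- N is a π'-group: apply Schur-Zassenhaus inside the preimage of Kbar
        have hNH0 : N ≤ H0 := by
          intro x hx
          rw [hH0, Subgroup.mem_comap]
          have hx1 : f x = 1 := by
            rw [← MonoidHom.mem_ker, hf, QuotientGroup.ker_mk']
            exact hx
          rw [hx1]
          exact Kbar.one_mem
        set N' := N.subgroupOf H0 with hN'
        haveI : N'.Normal := hNnormal.subgroupOf H0
        have hcN' : Nat.card N' = Nat.card N := card_subgroupOf hNH0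
        have hNpos : 0 < Nat.card N := Nat.card_pos
        have hidxN' : N'.index = Nat.card Kbar := by
          have e : Nat.card N' * N'.index = Nat.card H0 := Subgroup.card_mul_index N'
          rw [hcN', hcardH0] at e
          refine Nat.eq_of_mul_eq_mul_left hNpos ?_
          rw [e]; ring
        have hcop : Nat.Coprime (Nat.card N') N'.index := by
          rw [Nat.coprime_iff_gcd_eq_one]
          by_contra hg
          have hp := Nat.minFac_prime hg
          have hdvd1 : (Nat.gcd (Nat.card N') N'.index).minFac ∣ Nat.card N' :=
            (Nat.minFac_dvd _).trans (Nat.gcd_dvd_left _ _)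
          have hdvd2 : (Nat.gcd (Nat.card N') N'.index).minFac ∣ N'.index :=
            (Nat.minFac_dvd _).trans (Nat.gcd_dvd_right _ _)
          have h1 : _ ∈ π := hK1 _ hp (hidxN' ▸ hdvd2)
          have h2 := hNπ' _ hp (hcN' ▸ hdvd1)
          exact h2 h1
        obtain ⟨C, hC⟩ := Subgroup.exists_right_complement'_of_coprime hcop
        have hcC : Nat.card C = Nat.card Kbar := by
          have e := hC.card_mul
          rw [hcN', hcardH0] at e
          refine Nat.eq_of_mul_eq_mul_left hNpos ?_
          rw [e]; ring
        have hcmap : Nat.card (C.map H0.subtype) = Nat.card Kbar := by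
          rw [← hcC]
          exact (Nat.card_congr (equivMapOfInjective _ _ (subtype_injective H0)).toEquiv).symm
        refine ⟨C.map H0.subtype, fun p hp hd => ?_, fun p hp hd => ?_⟩
        · exact hK1 p hp (hcmap ▸ hd)
        · have e : Nat.card (C.map H0.subtype) * (C.map H0.subtype).index = Nat.card G :=
            Subgroup.card_mul_index (C.map H0.subtype)
          have eG : Nat.card G = Nat.card Kbar * (Kbar.index * Nat.card N) := by
            rw [← hcardQ, ← Subgroup.card_mul_index Kbar]; ring
          rw [hcmap, eG] at e
          have hKpos : 0 < Nat.card Kbar := Nat.card_pos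
          have hidx : (C.map H0.subtype).index = Kbar.index * Nat.card N :=
            Nat.eq_of_mul_eq_mul_left hKpos e
          rw [hidx] at hd
          rcases hp.dvd_mul.mp hd with h | h
          · exact hK2 p hp h
          · exact hNπ' p hp h

end HallAux

/-- If `G` has a subnormal series `{e} = G₀ ⊲ G₁ ⊲ ... ⊲ Gₙ = G` in which every
factor is either a π-group or a π'-group, then `G` has a π-Hall subgroup. -/
theorem stmt2 {G : Type*} [Group G] [Finite G] (π : Set ℕ) (n : ℕ)
    (c : Fin (n + 1) → Subgroup G)
    (h0 : c 0 = ⊥) (hn : c (Fin.last n) = ⊤)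
    (hle : ∀ i : Fin n, c i.castSucc ≤ c i.succ)
    (hnorm : ∀ i : Fin n, ((c i.castSucc).subgroupOf (c i.succ)).Normal)
    (hfac : ∀ i : Fin n,
      (∀ p : ℕ, p.Prime → p ∣ (c i.castSucc).relIndex (c i.succ) → p ∈ π) ∨
      (∀ p : ℕ, p.Prime → p ∣ (c i.castSucc).relIndex (c i.succ) → p ∉ π)) :
    ∃ H : Subgroup G, IsHall π H :=
  HallAux.mainAux (Nat.card G) G π n c h0 hn hle hnorm hfac le_rfl
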